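/- Let p ≥ 5 be prime and n a positive integer. Then 3 * (3^((p-1)n) - 1)/p ≡ -2n * H(floor(p/3)) mod p, where H(m) = sum_{j=1}^m 1/j is the m-th harmonic number, the congruence being between p-integral rationals. -/

import Mathlib

open Finset

/-- Congruence of rationals: x ≡ y mod p^k in the p-integral rationals ℤ_(p). -/
def RatModCong (p k : ℕ) (x y : ℚ) : Prop :=
  ∃ a b : ℤ, ¬ (p : ℤ) ∣ b ∧ (x - y) * b = (p : ℚ) ^ k * a

lemma sqz_pow {R : Type*} [CommRing R] (r : R) (h : r * r = 0) (n : ℕ) :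
    (1 + r) ^ n = 1 + n * r := by
  induction n with
  | zero => simp
  | succ k ih =>
    rw [pow_succ, ih]
    push_cast
    linear_combination (k : R) * h

lemma prod_add_sq_zero {R : Type*} [CommRing R] {ι : Type*} [DecidableEq ι]
    (z : R) (hz : z * z = 0) (s : Finset ι) (f g : ι → R) :
    ∏ i ∈ s, (f i + z * g i)
      = (∏ i ∈ s, f i) + z * ∑ i ∈ s, g i * ∏ j ∈ s.erase i, f j := by
  induction s using Finset.induction_on with
  | empty => simp
  | @insert a s ha ih =>
    rw [prod_insert ha, ih, prod_insert ha, sum_insert ha, erase_insert ha]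
    have key : ∑ i ∈ s, g i * ∏ j ∈ (insert a s).erase i, f j
        = f a * ∑ i ∈ s, g i * ∏ j ∈ s.erase i, f j := by
      rw [mul_sum]
      refine Finset.sum_congr rfl fun i hi => ?_
      have hia : a ≠ i := by rintro rfl; exact ha hi
      rw [Finset.erase_insert_of_ne hia,
        prod_insert (fun hmem => ha (Finset.mem_of_mem_erase hmem))]
      ring
    rw [key]
    linear_combination (g a * ∑ i ∈ s, g i * ∏ j ∈ s.erase i, f j) * hz

/-- For p ≥ 5 prime and n ≥ 1, with c = (3^((p-1)n)-1)/p (an integer),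
3c ≡ -2n·H(⌊p/3⌋) mod p, where H(m) = ∑_{j=1}^m 1/j. -/
theorem three_fermat_quotient_cong (p n : ℕ) (hp : p.Prime) (hp5 : 5 ≤ p) (hn : 0 < n)
    (c : ℤ) (hc : (p : ℤ) * c = 3 ^ ((p - 1) * n) - 1) :
    RatModCong p 1 (3 * (c : ℚ))
      (-(2 * (n : ℚ)) * ∑ j ∈ Finset.Icc 1 (p / 3), (1 : ℚ) / (j : ℚ)) := by
  haveI : Fact p.Prime := ⟨hp⟩
  have hp1 : 1 < p := by omega
  have hp0 : p ≠ 0 := by omega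
  have hpZ : (p : ℤ) ≠ 0 := by exact_mod_cast hp0
  have hp3 : p % 3 ≠ 0 := by
    intro h
    rcases hp.eq_one_or_self_of_dvd 3 (Nat.dvd_of_mod_eq_zero h) with h' | h' <;> omega
  set m := p / 3 with hm
  -- basic nonzero facts in ZMod p
  have hcast_ne : ∀ j : ℕ, 0 < j → j < p → ((j : ZMod p) ≠ 0) := by
    intro j hj1 hj2 h0
    have h' := (ZMod.natCast_eq_zero_iff j p).mp h0
    have := Nat.le_of_dvd hj1 h'
    omega
  have h3K : ((3 : ZMod p)) ≠ 0 := by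
    have := hcast_ne 3 (by norm_num) (by omega); exact_mod_cast this
  have h2K : ((2 : ZMod p)) ≠ 0 := by
    have := hcast_ne 2 (by norm_num) (by omega); exact_mod_cast this
  -- Fermat quotient q
  obtain ⟨q, hq⟩ : ∃ q : ℤ, (3 : ℤ) ^ (p - 1) = 1 + (p : ℤ) * q := by
    have h1 : (((3 : ℤ) ^ (p - 1) - 1 : ℤ) : ZMod p) = 0 := by
      push_cast
      rw [ZMod.pow_card_sub_one_eq_one h3K]
      ring
    obtain ⟨q, hq⟩ := (ZMod.intCast_zmod_eq_zero_iff_dvd _ p).mp h1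
    exact ⟨q, by linarith⟩
  -- Step 1 : c ≡ n q (mod p)
  have hstep1 : ((c : ZMod p)) = (n : ZMod p) * ((q : ℤ) : ZMod p) := by
    have hz2 : ((p : ZMod (p^2)) * ((q : ℤ) : ZMod (p^2))) *
        ((p : ZMod (p^2)) * ((q : ℤ) : ZMod (p^2))) = 0 := by
      have hpp : ((p : ZMod (p^2)) * (p : ZMod (p^2))) = 0 := by
        have h0 : (((p^2 : ℕ)) : ZMod (p^2)) = 0 := ZMod.natCast_self _
        push_cast at h0
        linear_combination h0
      linear_combination (((q:ℤ) : ZMod (p^2)) * ((q:ℤ) : ZMod (p^2))) * hpp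
    have key : (((3 : ℤ) ^ ((p-1)*n) - 1 - (n:ℤ) * ((p:ℤ) * q) : ℤ) : ZMod (p^2)) = 0 := by
      have h1 : (((3:ℤ) ^ ((p-1)*n) : ℤ) : ZMod (p^2)) =
          ((1 : ZMod (p^2)) + (p : ZMod (p^2)) * ((q:ℤ) : ZMod (p^2))) ^ n := by
        rw [pow_mul]
        rw [show (((3:ℤ)^(p-1))^n : ℤ) = ((1 + (p:ℤ)*q)^n : ℤ) by rw [← hq]]
        push_cast
        ring
      push_cast
      push_cast at h1
      rw [h1, sqz_pow _ hz2 n]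
      push_cast
      ring
    have hdvd2 : ((p:ℤ))^2 ∣ ((3 : ℤ) ^ ((p-1)*n) - 1 - (n:ℤ) * ((p:ℤ) * q)) := by
      have h2 := (ZMod.intCast_zmod_eq_zero_iff_dvd _ (p^2)).mp key
      push_cast at h2
      exact_mod_cast h2
    rw [← hc] at hdvd2
    have hdvd1 : (p:ℤ) ∣ (c - (n:ℤ) * q) := by
      obtain ⟨k, hk⟩ := hdvd2
      refine ⟨k, ?_⟩
      apply mul_left_cancel₀ hpZ
      linear_combination hk
    have h0 : ((c - (n:ℤ)*q : ℤ) : ZMod p) = 0 :=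
      (ZMod.intCast_zmod_eq_zero_iff_dvd _ p).mpr hdvd1
    push_cast at h0
    linear_combination h0
  -- the interval and the permutation j ↦ 3j % p
  set I : Finset ℕ := Finset.Icc 1 (p-1) with hI
  have hrmem : ∀ j ∈ I, 3*j % p ∈ I := by
    intro j hj
    rw [hI, Finset.mem_Icc] at *
    have hjp : ¬ p ∣ 3*j := by
      intro hdvd
      rcases (Nat.Prime.dvd_mul hp).mp hdvd with h' | h'
      · have := Nat.le_of_dvd (by norm_num) h'; omega
      · have := Nat.le_of_dvd (by omega) h'; omega
    have h1 : 3*j % p ≠ 0 := fun h => hjp (Nat.dvd_of_mod_eq_zero h)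
    have h2 : 3*j % p < p := Nat.mod_lt _ (by omega)
    omega
  have hrinj : ∀ i ∈ I, ∀ j ∈ I, 3*i % p = 3*j % p → i = j := by
    intro i hi j hj hij
    rw [hI, Finset.mem_Icc] at hi hj
    have h1 : ((3*i : ℕ) : ZMod p) = ((3*j : ℕ) : ZMod p) := by
      rw [← ZMod.natCast_mod (3*i) p, ← ZMod.natCast_mod (3*j) p, hij]
    push_cast at h1
    have h2 : ((i : ℕ) : ZMod p) = ((j : ℕ) : ZMod p) :=
      mul_left_cancel₀ h3K h1
    have h4 : i % p = j % p := (ZMod.natCast_eq_natCast_iff i j p).mp h2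
    rw [Nat.mod_eq_of_lt (by omega), Nat.mod_eq_of_lt (by omega)] at h4
    exact h4
  have himg : I.image (fun j => 3*j % p) = I := by
    apply Finset.eq_of_subset_of_card_le
    · intro x hx
      obtain ⟨j, hj, rfl⟩ := Finset.mem_image.mp hx
      exact hrmem j hj
    · rw [Finset.card_image_of_injOn (fun a ha b hb => hrinj a ha b hb)]
  have hrperm : ∏ j ∈ I, (3*j % p) = ∏ j ∈ I, j := by
    conv_rhs => rw [← himg]
    rw [Finset.prod_image hrinj]
  have hcard : I.card = p - 1 := by rw [hI, Nat.card_Icc]; omega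
  have hfact : ∏ j ∈ I, j = (p-1).factorial := by
    rw [hI, ← Finset.Ico_add_one_right_eq_Icc, Finset.prod_Ico_id_eq_factorial]
  -- T : the key auxiliary sum
  set T : ℕ := ∑ j ∈ I, (3*j/p) * ∏ i ∈ I.erase j, (3*i % p) with hT
  -- Step 2a : q * (p-1)! ≡ T (mod p)
  have hqW : ((q : ℤ) : ZMod p) * ((p-1).factorial : ZMod p) = ((T : ℕ) : ZMod p) := by
    have hpp : ((p : ZMod (p^2)) * (p : ZMod (p^2))) = 0 := by
      have h0 : (((p^2 : ℕ)) : ZMod (p^2)) = 0 := ZMod.natCast_self _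
      push_cast at h0
      linear_combination h0
    have hprod3 : ∏ j ∈ I, (3*j) = 3^(p-1) * (p-1).factorial := by
      calc ∏ j ∈ I, (3*j) = (∏ _j ∈ I, 3) * ∏ j ∈ I, j := by
            rw [← Finset.prod_mul_distrib]
        _ = 3^(p-1) * (p-1).factorial := by rw [Finset.prod_const, hcard, hfact]
    have hexp : ((3^(p-1) * (p-1).factorial : ℕ) : ZMod (p^2))
        = (((p-1).factorial : ℕ) : ZMod (p^2)) + (p : ZMod (p^2)) * ((T : ℕ) : ZMod (p^2)) := by
      rw [← hprod3, Nat.cast_prod]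
      have hterm : ∀ j ∈ I, ((3*j : ℕ) : ZMod (p^2))
          = ((3*j % p : ℕ) : ZMod (p^2)) + (p : ZMod (p^2)) * ((3*j/p : ℕ) : ZMod (p^2)) := by
        intro j _
        have hdm : p * (3*j/p) + 3*j % p = 3*j := Nat.div_add_mod (3*j) p
        have hcast : ((p * (3*j/p) + 3*j % p : ℕ) : ZMod (p^2)) = ((3*j : ℕ) : ZMod (p^2)) := by
          rw [hdm]
        push_cast at hcast ⊢
        linear_combination - hcast
      rw [Finset.prod_congr rfl hterm,
        prod_add_sq_zero (p : ZMod (p^2)) hpp I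
          (fun i => ((3*i % p : ℕ) : ZMod (p^2))) (fun i => ((3*i/p : ℕ) : ZMod (p^2)))]
      congr 1
      · rw [← Nat.cast_prod, hrperm, hfact]
      · rw [hT]
        push_cast
        ring
    -- move to an integer divisibility
    have hz0 : (((3:ℤ)^(p-1) * ((p-1).factorial : ℤ)
        - ((p-1).factorial : ℤ) - (p:ℤ) * (T:ℤ) : ℤ) : ZMod (p^2)) = 0 := by
      push_cast
      push_cast at hexp
      linear_combination hexp
    have hdvd : ((p:ℤ))^2 ∣ ((3:ℤ)^(p-1) * ((p-1).factorial : ℤ)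
        - ((p-1).factorial : ℤ) - (p:ℤ) * (T:ℤ)) := by
      have h2 := (ZMod.intCast_zmod_eq_zero_iff_dvd _ (p^2)).mp hz0
      push_cast at h2
      exact_mod_cast h2
    rw [hq] at hdvd
    have hdvd1 : (p:ℤ) ∣ (q * ((p-1).factorial : ℤ) - (T:ℤ)) := by
      obtain ⟨k, hk⟩ := hdvd
      refine ⟨k, ?_⟩
      apply mul_left_cancel₀ hpZ
      linear_combination hk
    have h0 : ((q * ((p-1).factorial : ℤ) - (T:ℤ) : ℤ) : ZMod p) = 0 :=
      (ZMod.intCast_zmod_eq_zero_iff_dvd _ p).mpr hdvd1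
    push_cast at h0
    linear_combination h0
  -- Step 2b : T = (p-1)! * Σ in ZMod p, where Σ = ∑ s_j (3j)⁻¹
  have hmodval : ∀ j : ℕ, ((3*j % p : ℕ) : ZMod p) = 3 * (j : ZMod p) := by
    intro j
    rw [ZMod.natCast_mod]
    push_cast
    ring
  have hjne : ∀ j ∈ I, ((j : ZMod p)) ≠ 0 := by
    intro j hj
    rw [hI, Finset.mem_Icc] at hj
    exact hcast_ne j (by omega) (by omega)
  have hTval : ((T : ℕ) : ZMod p)
      = ((p-1).factorial : ZMod p) *
        ∑ j ∈ I, ((3*j/p : ℕ) : ZMod p) * (3 * (j : ZMod p))⁻¹ := by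
    rw [hT]
    push_cast
    rw [Finset.mul_sum]
    refine Finset.sum_congr rfl fun j hj => ?_
    have h3j : (3 : ZMod p) * (j : ZMod p) ≠ 0 := mul_ne_zero h3K (hjne j hj)
    have hpe : (∏ i ∈ I.erase j, ((3*i % p : ℕ) : ZMod p)) * ((3*j % p : ℕ) : ZMod p)
        = ((p-1).factorial : ZMod p) := by
      rw [show (∏ i ∈ I.erase j, ((3*i % p : ℕ) : ZMod p)) * ((3*j % p : ℕ) : ZMod p)
          = ((∏ i ∈ I.erase j, (3*i % p)) * (3*j % p) : ℕ) by push_cast; ring]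
      rw [Finset.prod_erase_mul I _ hj, hrperm, hfact]
    have he : (∏ i ∈ I.erase j, ((3*i % p : ℕ) : ZMod p))
        = ((p-1).factorial : ZMod p) * (3 * (j : ZMod p))⁻¹ := by
      rw [← hpe, hmodval j]
      field_simp
      rw [mul_div_cancel_right₀ _ (hjne j hj)]
    calc ((3*j/p : ℕ) : ZMod p) * ∏ i ∈ I.erase j, ((3*i % p : ℕ) : ZMod p)
        = ((3*j/p : ℕ) : ZMod p) * (((p-1).factorial : ZMod p) * (3 * (j : ZMod p))⁻¹) := by
          rw [he]
      _ = ((p-1).factorial : ZMod p) * (((3*j/p : ℕ) : ZMod p) * (3 * (j : ZMod p))⁻¹) := by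
          ring
  -- (p-1)! ≠ 0 (Wilson)
  have hWne : (((p-1).factorial : ℕ) : ZMod p) ≠ 0 := by
    rw [ZMod.wilsons_lemma]
    intro h
    have : (1 : ZMod p) = 0 := by linear_combination -h
    exact one_ne_zero this
  -- Step 2c : 3 q = ∑ s_j j⁻¹
  have hq3 : (3 : ZMod p) * ((q:ℤ) : ZMod p)
      = ∑ j ∈ I, ((3*j/p : ℕ) : ZMod p) * ((j : ZMod p))⁻¹ := by
    have hQ : ((q:ℤ) : ZMod p) = ∑ j ∈ I, ((3*j/p : ℕ) : ZMod p) * (3 * (j:ZMod p))⁻¹ := by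
      apply mul_right_cancel₀ hWne
      rw [hqW, hTval]
      ring
    rw [hQ, Finset.mul_sum]
    refine Finset.sum_congr rfl fun j hj => ?_
    rw [mul_inv]
    linear_combination (((3*j/p : ℕ) : ZMod p) * ((j : ZMod p))⁻¹) * mul_inv_cancel₀ h3K
  -- Step 2d : the floor values
  set t : ℕ := 2*p/3 with ht
  have he1 : p % 3 = 1 ∨ p % 3 = 2 := by omega
  have hE2 : t = 2*m + (p % 3 - 1) := by rcases he1 with h | h <;> omega
  have hsval : ∀ j ∈ I, 3*j/p = (if m < j then 1 else 0) + (if t < j then 1 else 0) := by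
    intro j hj
    rw [hI, Finset.mem_Icc] at hj
    rcases le_or_gt j m with h1 | h1
    · rw [if_neg (by omega), if_neg (by omega)]
      exact Nat.div_eq_of_lt (by omega)
    · rcases le_or_gt j t with h2 | h2
      · rw [if_pos h1, if_neg (by omega)]
        exact Nat.div_eq_of_lt_le (by omega) (by omega)
      · rw [if_pos h1, if_pos h2]
        exact Nat.div_eq_of_lt_le (by omega) (by omega)
  have hsplit : ∑ j ∈ I, ((3*j/p : ℕ) : ZMod p) * ((j : ZMod p))⁻¹
      = (∑ j ∈ Finset.Icc (m+1) (p-1), ((j : ZMod p))⁻¹)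
        + ∑ j ∈ Finset.Icc (t+1) (p-1), ((j : ZMod p))⁻¹ := by
    have h1 : ∑ j ∈ I, ((3*j/p : ℕ) : ZMod p) * ((j : ZMod p))⁻¹
        = ∑ j ∈ I, ((if m < j then ((j : ZMod p))⁻¹ else 0)
            + (if t < j then ((j : ZMod p))⁻¹ else 0)) := by
      refine Finset.sum_congr rfl fun j hj => ?_
      rw [hsval j hj]
      push_cast
      split_ifs <;> ring
    rw [h1, Finset.sum_add_distrib, ← Finset.sum_filter, ← Finset.sum_filter]
    congr 1
    · congr 1
      ext x
      simp only [hI, Finset.mem_filter, Finset.mem_Icc]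
      omega
    · congr 1
      ext x
      simp only [hI, Finset.mem_filter, Finset.mem_Icc]
      omega
  -- reflection lemma
  have hreflect : ∀ a : ℕ, 1 ≤ a → a ≤ p →
      ∑ j ∈ Finset.Icc a (p-1), ((j : ZMod p))⁻¹
        = - ∑ i ∈ Finset.Icc 1 (p-a), ((i : ZMod p))⁻¹ := by
    intro a ha1 ha2
    rw [← Finset.sum_neg_distrib]
    refine Finset.sum_nbij' (fun j => p - j) (fun i => p - i) ?_ ?_ ?_ ?_ ?_
    · intro x hx
      simp only [Finset.mem_Icc] at hx ⊢
      omega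
    · intro x hx
      simp only [Finset.mem_Icc] at hx ⊢
      omega
    · intro x hx
      simp only [Finset.mem_Icc] at hx
      show p - (p - x) = x
      omega
    · intro x hx
      simp only [Finset.mem_Icc] at hx
      show p - (p - x) = x
      omega
    · intro x hx
      rw [Finset.mem_Icc] at hx
      have hcast : (((p - x : ℕ)) : ZMod p) = - (x : ZMod p) := by
        rw [Nat.cast_sub (by omega), ZMod.natCast_self]
        ring
      rw [hcast, inv_neg, neg_neg]
  -- H_{p-1} = 0
  have hS1 : ∑ j ∈ Finset.Icc 1 (p-1), ((j : ZMod p))⁻¹ = 0 := by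
    have h1 := hreflect 1 le_rfl (by omega)
    have h2 : (2 : ZMod p) * ∑ j ∈ Finset.Icc 1 (p-1), ((j : ZMod p))⁻¹ = 0 := by
      linear_combination h1
    rcases mul_eq_zero.mp h2 with h | h
    · exact absurd h h2K
    · exact h
  -- the two tail sums
  set A : ZMod p := ∑ j ∈ Finset.Icc 1 m, ((j : ZMod p))⁻¹ with hA
  have htail1 : ∑ j ∈ Finset.Icc (m+1) (p-1), ((j : ZMod p))⁻¹ = -A := by
    have hsum : A + ∑ j ∈ Finset.Icc (m+1) (p-1), ((j : ZMod p))⁻¹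
        = ∑ j ∈ Finset.Icc 1 (p-1), ((j : ZMod p))⁻¹ := by
      rw [hA, show Finset.Icc 1 m = Finset.Ioc 0 m from (Finset.Icc_add_one_left_eq_Ioc 0 m),
        Finset.Icc_add_one_left_eq_Ioc, show Finset.Icc 1 (p-1) = Finset.Ioc 0 (p-1) from
          (Finset.Icc_add_one_left_eq_Ioc 0 (p-1))]
      exact Finset.sum_Ioc_consecutive _ (by omega) (by omega)
    rw [hS1] at hsum
    linear_combination hsum
  have htail2 : ∑ j ∈ Finset.Icc (t+1) (p-1), ((j : ZMod p))⁻¹ = -A := by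
    rw [hreflect (t+1) (by omega) (by omega), show p - (t+1) = m by omega]
  -- Glaisher : 3q = -2A
  have hglaisher : (3 : ZMod p) * ((q:ℤ) : ZMod p) = -(2 * A) := by
    rw [hq3, hsplit, htail1, htail2]
    ring
  -- core congruence : 3c + 2nA = 0 in ZMod p
  have hcore : (3 : ZMod p) * (c : ZMod p) + 2 * (n : ZMod p) * A = 0 := by
    rw [hstep1]
    linear_combination (n : ZMod p) * hglaisher
  -- Assemble the rational congruence
  have hmlt : m < p := by omega
  have hdvdfac : ∀ j ∈ Finset.Icc 1 m, j ∣ m.factorial := by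
    intro j hj
    rw [Finset.mem_Icc] at hj
    exact Nat.dvd_factorial (by omega) hj.2
  set D : ℕ := ∑ j ∈ Finset.Icc 1 m, m.factorial / j with hD
  set N : ℤ := 3 * c * (m.factorial : ℤ) + 2 * n * (D : ℤ) with hN
  -- p ∣ N
  have hNdvd : (p : ℤ) ∣ N := by
    have hDK : ((D : ℕ) : ZMod p) = (m.factorial : ZMod p) * A := by
      rw [hD, Nat.cast_sum, hA, Finset.mul_sum]
      refine Finset.sum_congr rfl fun j hj => ?_
      have hjm : j ∈ Finset.Icc 1 m := hj
      rw [Finset.mem_Icc] at hjm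
      have hjne' : ((j : ZMod p)) ≠ 0 := hcast_ne j (by omega) (by omega)
      have hdm : m.factorial / j * j = m.factorial := Nat.div_mul_cancel (hdvdfac j hj)
      have hc2 : ((m.factorial / j : ℕ) : ZMod p) * (j : ZMod p) = (m.factorial : ZMod p) := by
        rw [show ((m.factorial / j : ℕ) : ZMod p) * ((j : ℕ) : ZMod p)
            = ((m.factorial / j * j : ℕ) : ZMod p) by push_cast; ring, hdm]
      field_simp at hc2 ⊢
      linear_combination hc2
    have hNK : ((N : ℤ) : ZMod p) = 0 := by
      rw [hN]
      push_cast
      rw [hDK]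
      push_cast
      linear_combination (m.factorial : ZMod p) * hcore
    exact (ZMod.intCast_zmod_eq_zero_iff_dvd _ p).mp hNK
  refine ⟨N / p, (m.factorial : ℤ), ?_, ?_⟩
  · intro hdvd
    have h1 : p ∣ m.factorial := by exact_mod_cast hdvd
    have h2 : p ≤ m := (Nat.Prime.dvd_factorial hp).mp h1
    omega
  · have hmain : (3 * (c:ℚ) - (-(2 * (n:ℚ)) * ∑ j ∈ Finset.Icc 1 m, (1:ℚ)/(j:ℚ)))
        * ((m.factorial : ℤ) : ℚ) = (N : ℚ) := by
      have hsumQ : ((D : ℕ) : ℚ) = (∑ j ∈ Finset.Icc 1 m, (1:ℚ)/(j:ℚ)) * (m.factorial : ℚ) := by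
        rw [hD, Nat.cast_sum, Finset.sum_mul]
        refine Finset.sum_congr rfl fun j hj => ?_
        have hjm := Finset.mem_Icc.mp hj
        rw [Nat.cast_div (hdvdfac j hj) (Nat.cast_ne_zero.mpr (show j ≠ 0 by omega))]
        ring
      rw [hN]
      push_cast
      push_cast at hsumQ
      linear_combination (-2 : ℚ) * (n:ℚ) * hsumQ
    rw [hmain, pow_one]
    rw [show (p:ℚ) * ((N / p : ℤ) : ℚ) = (((p:ℤ) * (N / p) : ℤ) : ℚ) by push_cast; ring,
      Int.mul_ediv_cancel' hNdvd]
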